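/- Let n ≥ 7 be odd and G = ⟨g⟩ a cyclic group of order n. Let S = 0^{n−3}·g^{n−3}·(2g)·((n−1)g). Then |S| = 2n − 4, 0 ∉ Σ_n(S), Σ_n(S) = {g, 2g, …, (n−1)g}, and |Σ_n(S)| = n − 1. -/

import Mathlib

/-- Set of sums of nonempty subsequences of `S`. -/
def subSums {G : Type*} [AddCommMonoid G] (S : Multiset G) : Set G :=
  {x | ∃ T : Multiset G, T ≤ S ∧ T ≠ 0 ∧ T.sum = x}

/-- Set of sums of subsequences of `S` of length exactly `k`. -/
def sumsLen {G : Type*} [AddCommMonoid G] (k : ℕ) (S : Multiset G) : Set G :=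
  {x | ∃ T : Multiset G, T ≤ S ∧ Multiset.card T = k ∧ T.sum = x}

/-- Set of sums of subsequences of `S` of length at least `k`. -/
def sumsGe {G : Type*} [AddCommMonoid G] (k : ℕ) (S : Multiset G) : Set G :=
  {x | ∃ T : Multiset G, T ≤ S ∧ k ≤ Multiset.card T ∧ T.sum = x}

open Multiset in
lemma stmt11_sum_aux {G : Type*} [AddCommGroup G] (g : G) (n a b c d : ℕ) :
    (replicate a (0 : G) + replicate b g + replicate c (2 • g) +
      replicate d ((n - 1) • g)).sum = (b + 2 * c + (n - 1) * d) • g := by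
  simp only [Multiset.sum_add, Multiset.sum_replicate, smul_zero, zero_add,
    add_smul, smul_smul]
  rw [mul_comm 2 c, mul_comm (n - 1) d]

theorem stmt11 {G : Type*} [AddCommGroup G] [Fintype G] [DecidableEq G]
    (n : ℕ) (hn : 7 ≤ n) (hodd : Odd n)
    (g : G) (hcard : Fintype.card G = n) (hord : addOrderOf g = n)
    (S : Multiset G)
    (hS : S = Multiset.replicate (n - 3) (0 : G) + Multiset.replicate (n - 3) g +
      {2 • g, (n - 1) • g}) :
    Multiset.card S = 2 * n - 4 ∧ (0 : G) ∉ sumsLen n S ∧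
      sumsLen n S = {x : G | ∃ i : ℕ, 1 ≤ i ∧ i ≤ n - 1 ∧ x = i • g} ∧
      (sumsLen n S).ncard = n - 1 := by
  classical
  have hn0 : n • g = 0 := hord ▸ addOrderOf_nsmul_eq_zero g
  have hper : ∀ i : ℕ, (i + n) • g = i • g := by
    intro i; rw [add_nsmul, hn0, add_zero]
  have hkey : ∀ i j : ℕ, i < n → j < n → i • g = j • g → i = j := by
    have key : ∀ i j : ℕ, i ≤ j → j < n → i • g = j • g → i = j := by
      intro i j hij hj h
      have h2 : (j - i) • g + i • g = j • g := by
        rw [← add_nsmul, Nat.sub_add_cancel hij]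
      rw [h, add_eq_right] at h2
      have hdvd : n ∣ j - i := by
        rw [← hord]; exact addOrderOf_dvd_iff_nsmul_eq_zero.mpr h2
      have := Nat.eq_zero_of_dvd_of_lt hdvd
      omega
    intro i j hi hj h
    rcases le_total i j with hle | hle
    · exact key i j hle hj h
    · exact (key j i hle hi h.symm).symm
  have hne : ∀ i j : ℕ, i < n → j < n → i ≠ j → (i • g : G) ≠ j • g :=
    fun i j hi hj hij h => hij (hkey i j hi hj h)
  -- distinctness of the four elements
  have d01 : (0 : G) ≠ g := by
    have := hne 0 1 (by omega) (by omega) (by omega); simpa using this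
  have d02 : (0 : G) ≠ 2 • g := by
    have := hne 0 2 (by omega) (by omega) (by omega); simpa using this
  have d03 : (0 : G) ≠ (n - 1) • g := by
    have := hne 0 (n - 1) (by omega) (by omega) (by omega); simpa using this
  have d12 : g ≠ 2 • g := by
    have := hne 1 2 (by omega) (by omega) (by omega); simpa using this
  have d13 : g ≠ (n - 1) • g := by
    have := hne 1 (n - 1) (by omega) (by omega) (by omega); simpa using this
  have d23 : (2 • g : G) ≠ (n - 1) • g :=
    hne 2 (n - 1) (by omega) (by omega) (by omega)
  -- counts of S
  have c0 : Multiset.count (0 : G) S = n - 3 := by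
    rw [hS]
    simp [Multiset.count_replicate, Multiset.count_singleton, d01, d02, d03,
      d01.symm, d02.symm, d03.symm]
  have c1 : Multiset.count g S = n - 3 := by
    rw [hS]
    simp [Multiset.count_replicate, Multiset.count_singleton, d01, d12, d13,
      d01.symm, d12.symm, d13.symm]
  have c2 : Multiset.count (2 • g) S = 1 := by
    rw [hS]
    simp [Multiset.count_replicate, Multiset.count_singleton, d02, d12, d23,
      d02.symm, d12.symm, d23.symm]
  have c3 : Multiset.count ((n - 1) • g) S = 1 := by
    rw [hS]
    simp [Multiset.count_replicate, Multiset.count_singleton, d03, d13, d23,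
      d03.symm, d13.symm, d23.symm]
  have cother : ∀ y : G, y ≠ 0 → y ≠ g → y ≠ 2 • g → y ≠ (n - 1) • g →
      Multiset.count y S = 0 := by
    intro y h0 h1 h2 h3
    rw [hS]
    simp [Multiset.count_replicate, Multiset.count_singleton, h0, h1, h2, h3,
      Ne.symm h0, Ne.symm h1, Ne.symm h2, Ne.symm h3]
  -- characterization of subsequences
  have hchar : ∀ T : Multiset G, T ≤ S ↔ ∃ a b c d : ℕ,
      a ≤ n - 3 ∧ b ≤ n - 3 ∧ c ≤ 1 ∧ d ≤ 1 ∧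
      T = Multiset.replicate a (0 : G) + Multiset.replicate b g +
        Multiset.replicate c (2 • g) + Multiset.replicate d ((n - 1) • g) := by
    intro T
    constructor
    · intro hT
      rw [Multiset.le_iff_count] at hT
      refine ⟨T.count 0, T.count g, T.count (2 • g), T.count ((n - 1) • g),
        ?_, ?_, ?_, ?_, ?_⟩
      · have := hT 0; rw [c0] at this; exact this
      · have := hT g; rw [c1] at this; exact this
      · have := hT (2 • g); rw [c2] at this; exact this
      · have := hT ((n - 1) • g); rw [c3] at this; exact this
      · ext y
        by_cases h0 : y = 0
        · subst h0
          simp [Multiset.count_replicate, d01, d02, d03, d01.symm, d02.symm, d03.symm]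
        by_cases h1 : y = g
        · subst h1
          simp [Multiset.count_replicate, d01, d12, d13, d01.symm, d12.symm, d13.symm]
        by_cases h2 : y = 2 • g
        · subst h2
          simp [Multiset.count_replicate, d02, d12, d23, d02.symm, d12.symm, d23.symm]
        by_cases h3 : y = (n - 1) • g
        · subst h3
          simp [Multiset.count_replicate, d03, d13, d23, d03.symm, d13.symm, d23.symm]
        · have hy := hT y
          rw [cother y h0 h1 h2 h3] at hy
          have hy0 : Multiset.count y T = 0 := Nat.le_zero.mp hy
          simp [Multiset.count_replicate, hy0, Ne.symm h0, Ne.symm h1,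
            Ne.symm h2, Ne.symm h3]
    · rintro ⟨a, b, c, d, ha, hb, hc, hd, rfl⟩
      have hpair : ({2 • g, (n - 1) • g} : Multiset G) =
          Multiset.replicate 1 (2 • g) + Multiset.replicate 1 ((n - 1) • g) := by
        rw [Multiset.replicate_one, Multiset.replicate_one, Multiset.singleton_add]
        rfl
      have hSform : S = Multiset.replicate (n - 3) (0 : G) + Multiset.replicate (n - 3) g +
          Multiset.replicate 1 (2 • g) + Multiset.replicate 1 ((n - 1) • g) := by
        rw [hS, hpair]
        exact (add_assoc _ _ _).symm
      rw [hSform]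
      exact add_le_add (add_le_add (add_le_add
        ((Multiset.replicate_le_replicate _).mpr ha)
        ((Multiset.replicate_le_replicate _).mpr hb))
        ((Multiset.replicate_le_replicate _).mpr hc))
        ((Multiset.replicate_le_replicate _).mpr hd)
  -- the set equality
  have hEq : sumsLen n S = {x : G | ∃ i : ℕ, 1 ≤ i ∧ i ≤ n - 1 ∧ x = i • g} := by
    ext x
    constructor
    · rintro ⟨T, hTS, hTcard, rfl⟩
      obtain ⟨a, b, c, d, ha, hb, hc, hd, rfl⟩ := (hchar T).mp hTS
      simp only [Multiset.card_add, Multiset.card_replicate] at hTcard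
      rw [stmt11_sum_aux]
      rcases Nat.le_one_iff_eq_zero_or_eq_one.mp hc with rfl | rfl <;>
        rcases Nat.le_one_iff_eq_zero_or_eq_one.mp hd with rfl | rfl
      · exact ⟨b, by omega, by omega, by norm_num⟩
      · refine ⟨b - 1, by omega, by omega, ?_⟩
        have : b + 2 * 0 + (n - 1) * 1 = (b - 1) + n := by omega
        rw [this, hper]
      · exact ⟨b + 2, by omega, by omega, by norm_num⟩
      · refine ⟨b + 1, by omega, by omega, ?_⟩
        have : b + 2 * 1 + (n - 1) * 1 = (b + 1) + n := by omega
        rw [this, hper]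
    · rintro ⟨i, hi1, hi2, rfl⟩
      by_cases hA : i ≤ 2
      · refine ⟨_, (hchar _).mpr ⟨n - 2 - i, i + 1, 0, 1, by omega, by omega,
          by omega, le_refl 1, rfl⟩, ?_, ?_⟩
        · simp only [Multiset.card_add, Multiset.card_replicate]; omega
        · rw [stmt11_sum_aux]
          have : (i + 1) + 2 * 0 + (n - 1) * 1 = i + n := by omega
          rw [this, hper]
      by_cases hB : i ≤ n - 3
      · refine ⟨_, (hchar _).mpr ⟨n - i, i, 0, 0, by omega, by omega,
          by omega, by omega, rfl⟩, ?_, ?_⟩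
        · simp only [Multiset.card_add, Multiset.card_replicate]; omega
        · rw [stmt11_sum_aux]; norm_num
      by_cases hC : i = n - 2
      · refine ⟨_, (hchar _).mpr ⟨1, n - 3, 1, 1, by omega, le_refl _,
          le_refl 1, le_refl 1, rfl⟩, ?_, ?_⟩
        · simp only [Multiset.card_add, Multiset.card_replicate]; omega
        · rw [stmt11_sum_aux]
          have : (n - 3) + 2 * 1 + (n - 1) * 1 = i + n := by omega
          rw [this, hper]
      · -- i = n - 1
        refine ⟨_, (hchar _).mpr ⟨2, n - 3, 1, 0, by omega, le_refl _,
          le_refl 1, by omega, rfl⟩, ?_, ?_⟩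
        · simp only [Multiset.card_add, Multiset.card_replicate]; omega
        · rw [stmt11_sum_aux]
          have : (n - 3) + 2 * 1 + (n - 1) * 0 = i := by omega
          rw [this]
  refine ⟨?_, ?_, hEq, ?_⟩
  · rw [hS]
    simp only [Multiset.card_add, Multiset.card_replicate, Multiset.insert_eq_cons,
      Multiset.card_cons, Multiset.card_singleton]
    omega
  · rw [hEq]
    rintro ⟨i, hi1, hi2, hi3⟩
    have h0 : (0 : ℕ) • g = i • g := by rw [zero_nsmul]; exact hi3
    have := hkey 0 i (by omega) (by omega) h0
    omega
  · rw [hEq]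
    have himg : {x : G | ∃ i : ℕ, 1 ≤ i ∧ i ≤ n - 1 ∧ x = i • g} =
        (fun i : ℕ => i • g) '' ↑(Finset.Icc 1 (n - 1)) := by
      ext x
      simp only [Set.mem_setOf_eq, Set.mem_image, Finset.coe_Icc, Set.mem_Icc]
      constructor
      · rintro ⟨i, h1, h2, rfl⟩; exact ⟨i, ⟨h1, h2⟩, rfl⟩
      · rintro ⟨i, ⟨h1, h2⟩, rfl⟩; exact ⟨i, h1, h2, rfl⟩
    rw [himg, Set.ncard_image_of_injOn, Set.ncard_coe_finset, Nat.card_Icc]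
    · omega
    · intro i hi j hj hij
      simp only [Finset.coe_Icc, Set.mem_Icc] at hi hj
      exact hkey i j (by omega) (by omega) hij
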